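/- Let B_1,…,B_n be p×m complex matrices with F_0(z) = ∑_{j=1}^n z^{-j} B_j satisfying F_0(z)*F_0(z) = I_m for all z on the unit circle, and let H_0 be the associated np×nm block Hankel matrix. Then the matrix I_{nm} − H_0* H_0 is positive semidefinite, satisfies I_{nm} − H_0* H_0 ≤ I_{nm} (in the Loewner order), and all of its entries in the first m rows and in the first m columns vanish; that is, I_{nm} − H_0* H_0 = diag(0_{m×m}, Δ) for some (nm−m)×(nm−m) positive semidefinite matrix Δ with Δ ≤ I. -/

import Mathlib

open Matrix Finset ComplexOrder

lemma rootsum (N : ℕ) (hN : 0 < N) (K : ℕ) :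
    ∑ t ∈ Finset.range N, Complex.exp (2 * Real.pi * Complex.I / N) ^ (t * K) =
      if N ∣ K then (N : ℂ) else 0 := by
  have hprim := Complex.isPrimitiveRoot_exp N hN.ne'
  set ζ := Complex.exp (2 * Real.pi * Complex.I / N) with hζ
  have : ∀ t : ℕ, ζ ^ (t * K) = (ζ ^ K) ^ t := by
    intro t; rw [← pow_mul, Nat.mul_comm]
  simp_rw [this]
  by_cases h : N ∣ K
  · rw [if_pos h]
    obtain ⟨c, rfl⟩ := h
    have : ζ ^ (N * c) = 1 := by rw [pow_mul, hprim.pow_eq_one, one_pow]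
    simp [this]
  · rw [if_neg h]
    have hne : ζ ^ K ≠ 1 := fun hc => h ((hprim.pow_eq_one_iff_dvd K).mp hc)
    have hpow : (ζ ^ K) ^ N = 1 := by
      rw [← pow_mul, Nat.mul_comm, pow_mul, hprim.pow_eq_one, one_pow]
    have := geom_sum_eq hne N
    rw [this, hpow, sub_self, zero_div]

lemma dvd_iff_eq (N K : ℕ) (h1 : 0 < K) (h2 : K < 2 * N) : N ∣ K ↔ K = N := by
  constructor
  · rintro ⟨c, rfl⟩
    match c with
    | 0 => omega
    | 1 => omega
    | (c+2) => exfalso; nlinarith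
  · rintro rfl; exact dvd_refl _

lemma scalar_pow (z : ℂ) (hz : ‖z‖ = 1) (n j l : ℕ) (hl : l < n) :
    z ^ n * ((starRingEnd ℂ) (z ^ (-(j + 1 : ℤ))) * z ^ (-(l + 1 : ℤ))) = z ^ (j + n - l) := by
  have hz0 : z ≠ 0 := by intro h; simp [h] at hz
  have hconj : (starRingEnd ℂ) z = z⁻¹ := by
    rw [← Complex.inv_eq_conj]
    simpa using hz
  rw [map_zpow₀, hconj, _root_.inv_zpow, ← _root_.zpow_neg, neg_neg]
  rw [← zpow_natCast z n, ← zpow_natCast z (j + n - l),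
    show ((j + n - l : ℕ) : ℤ) = (n : ℤ) + ((j + 1 : ℤ) + (-(l + 1))) by omega,
    zpow_add₀ hz0, zpow_add₀ hz0]
  rw [← zpow_add₀ hz0 (j:ℤ) 1]
  rw [← zpow_add₀ hz0 ((j:ℤ)+1) (-(l+1))]

lemma keyE (p m n : ℕ) (B : ℕ → Matrix (Fin p) (Fin m) ℂ)
    (hiso : ∀ z : ℂ, ‖z‖ = 1 →
      (∑ j ∈ Finset.range n, z ^ (-(j + 1 : ℤ)) • B (j + 1))ᴴ *
        (∑ j ∈ Finset.range n, z ^ (-(j + 1 : ℤ)) • B (j + 1)) = 1)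
    (z : ℂ) (hz : ‖z‖ = 1) :
    ∑ j ∈ Finset.range n, ∑ l ∈ Finset.range n,
      z ^ (j + n - l) • ((B (j+1))ᴴ * B (l+1)) = z ^ n • (1 : Matrix (Fin m) (Fin m) ℂ) := by
  have h := hiso z hz
  have expand : ∑ j ∈ Finset.range n, ∑ l ∈ Finset.range n,
      z ^ (j + n - l) • ((B (j+1))ᴴ * B (l+1))
      = z ^ n • ((∑ j ∈ Finset.range n, z ^ (-(j + 1 : ℤ)) • B (j + 1))ᴴ *
        (∑ j ∈ Finset.range n, z ^ (-(j + 1 : ℤ)) • B (j + 1))) := by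
    rw [Matrix.conjTranspose_sum, Matrix.sum_mul, Finset.smul_sum]
    refine Finset.sum_congr rfl fun j hj => ?_
    rw [Matrix.mul_sum, Finset.smul_sum]
    refine Finset.sum_congr rfl fun l hl => ?_
    rw [Matrix.conjTranspose_smul, Matrix.smul_mul, Matrix.mul_smul, smul_smul, smul_smul]
    congr 1
    rw [mul_assoc]
    exact (scalar_pow z hz n j l (Finset.mem_range.mp hl)).symm
  rw [expand, h]

lemma relations (p m n : ℕ) (B : ℕ → Matrix (Fin p) (Fin m) ℂ) (hn : 0 < n)
    (hiso : ∀ z : ℂ, ‖z‖ = 1 →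
      (∑ j ∈ Finset.range n, z ^ (-(j + 1 : ℤ)) • B (j + 1))ᴴ *
        (∑ j ∈ Finset.range n, z ^ (-(j + 1 : ℤ)) • B (j + 1)) = 1)
    (d : ℕ) (hd : d < n) :
    ∑ j ∈ Finset.range n, (if j + d + 1 ≤ n then (B (j+1))ᴴ * B (j+d+1) else 0) =
      if d = 0 then (1 : Matrix (Fin m) (Fin m) ℂ) else 0 := by
  set N := 2 * n - 1 with hNdef
  have hN : 0 < N := by omega
  set ζ := Complex.exp (2 * Real.pi * Complex.I / N) with hζdef
  have hprim := Complex.isPrimitiveRoot_exp N hN.ne'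
  have hζ1 : ‖ζ‖ = 1 := by
    rw [hζdef, Complex.norm_exp]
    norm_num [Complex.div_re]
  have hNC : (N:ℂ) ≠ 0 := Nat.cast_ne_zero.mpr hN.ne'
  have hζt : ∀ t : ℕ, ‖ζ ^ t‖ = 1 := fun t => by rw [norm_pow, hζ1, one_pow]
  have hsum : ∑ t ∈ Finset.range N, ζ ^ (t * (n - 1 + d)) •
      (∑ j ∈ Finset.range n, ∑ l ∈ Finset.range n,
        (ζ ^ t) ^ (j + n - l) • ((B (j+1))ᴴ * B (l+1)))
      = ∑ t ∈ Finset.range N, ζ ^ (t * (n - 1 + d)) •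
        ((ζ ^ t) ^ n • (1 : Matrix (Fin m) (Fin m) ℂ)) :=
    Finset.sum_congr rfl fun t _ => by rw [keyE p m n B hiso (ζ ^ t) (hζt t)]
  have hL : ∑ t ∈ Finset.range N, ζ ^ (t * (n - 1 + d)) •
      (∑ j ∈ Finset.range n, ∑ l ∈ Finset.range n,
        (ζ ^ t) ^ (j + n - l) • ((B (j+1))ᴴ * B (l+1)))
      = (N:ℂ) • ∑ j ∈ Finset.range n,
          (if j + d + 1 ≤ n then (B (j+1))ᴴ * B (j+d+1) else 0) := by
    simp_rw [Finset.smul_sum, smul_smul, ← pow_mul, ← pow_add, ← Nat.mul_add]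
    rw [Finset.sum_comm]
    refine Finset.sum_congr rfl fun j hj => ?_
    rw [Finset.sum_comm]
    have hj' : j < n := Finset.mem_range.mp hj
    have step : ∀ l ∈ Finset.range n,
        ∑ t ∈ Finset.range N, ζ ^ (t * (n - 1 + d + (j + n - l))) • ((B (j+1))ᴴ * B (l+1))
        = if l = j + d then (N:ℂ) • ((B (j+1))ᴴ * B (l+1)) else 0 := by
      intro l hl
      have hl' : l < n := Finset.mem_range.mp hl
      rw [← Finset.sum_smul, rootsum N hN]
      have hcond : (N ∣ n - 1 + d + (j + n - l)) ↔ (l = j + d) := by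
        rw [dvd_iff_eq N _ (by omega) (by omega)]
        omega
      rw [ite_congr (by rw [hcond]) (fun _ => rfl) (fun _ => rfl), ite_smul, zero_smul]
    rw [Finset.sum_congr rfl step, Finset.sum_ite_eq' (Finset.range n) (j + d)
      (fun l => (N:ℂ) • ((B (j+1))ᴴ * B (l+1)))]
    by_cases h : j + d + 1 ≤ n
    · rw [if_pos (Finset.mem_range.mpr (by omega)), if_pos h]
    · rw [if_neg (by simp only [Finset.mem_range]; omega), if_neg h, smul_zero]
  have hR : ∑ t ∈ Finset.range N, ζ ^ (t * (n - 1 + d)) •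
      ((ζ ^ t) ^ n • (1 : Matrix (Fin m) (Fin m) ℂ))
      = (N:ℂ) • (if d = 0 then (1 : Matrix (Fin m) (Fin m) ℂ) else 0) := by
    simp_rw [smul_smul, ← pow_mul, ← pow_add, ← Nat.mul_add]
    rw [← Finset.sum_smul, rootsum N hN]
    have hcond : (N ∣ n - 1 + d + n) ↔ (d = 0) := by
      constructor
      · intro h
        have h2 : n - 1 + d + n = N + d := by omega
        rw [h2] at h
        have := (Nat.dvd_add_right (dvd_refl N)).mp h
        exact Nat.eq_zero_of_dvd_of_lt this (by omega) |>.symm ▸ rfl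
      · intro h; subst h; exact ⟨1, by omega⟩
    rw [ite_congr (by rw [hcond]) (fun _ => rfl) (fun _ => rfl)]
    split_ifs <;> simp
  rw [hL, hR] at hsum
  exact smul_right_injective _ hNC hsum

def Smat (p m n : ℕ) (B : ℕ → Matrix (Fin p) (Fin m) ℂ) :
    Matrix (Fin n × Fin p) (Fin n × Fin m) ℂ :=
  fun x y => if x.1.val + 1 ≤ y.1.val then B (y.1.val - x.1.val) x.2 y.2 else 0

lemma entry_eq (p m n : ℕ) (B : ℕ → Matrix (Fin p) (Fin m) ℂ) (hn : 0 < n)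
    (hiso : ∀ z : ℂ, ‖z‖ = 1 →
      (∑ j ∈ Finset.range n, z ^ (-(j + 1 : ℤ)) • B (j + 1))ᴴ *
        (∑ j ∈ Finset.range n, z ^ (-(j + 1 : ℤ)) • B (j + 1)) = 1)
    (H₀ : Matrix (Fin n × Fin p) (Fin n × Fin m) ℂ)
    (hH₀ : ∀ (i j : Fin n) (a : Fin p) (b : Fin m),
      H₀ (i, a) (j, b) = if i.val + j.val + 1 ≤ n then B (i.val + j.val + 1) a b else 0)
    (k k' : Fin n) (b c : Fin m) (hkk : k.val ≤ k'.val) :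
    (H₀ᴴ * H₀ + (Smat p m n B)ᴴ * Smat p m n B) (k, b) (k', c)
      = (1 : Matrix (Fin n × Fin m) (Fin n × Fin m) ℂ) (k, b) (k', c) := by
  set d := k'.val - k.val with hddef
  have hd : d < n := by have := k'.isLt; omega
  have hk'd : k'.val = k.val + d := by omega
  set f : ℕ → ℂ := fun j => if j + d + 1 ≤ n then
      ∑ a : Fin p, (starRingEnd ℂ) (B (j+1) a b) * B (j+d+1) a c else 0 with hfdef
  have hrel := relations p m n B hn hiso d hd
  have hrel' : ∑ j ∈ Finset.range n, f j
      = if d = 0 then ((1 : Matrix (Fin m) (Fin m) ℂ) b c) else 0 := by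
    have h2 := congrFun (congrFun hrel b) c
    simpa [hfdef, Matrix.sum_apply, Matrix.mul_apply, Matrix.conjTranspose_apply,
      apply_ite (fun M : Matrix (Fin m) (Fin m) ℂ => M b c)] using h2
  have hsum1 : (H₀ᴴ * H₀) (k, b) (k', c) = ∑ i ∈ Finset.range n, f (i + k.val) := by
    rw [Matrix.mul_apply, Fintype.sum_prod_type,
      ← Fin.sum_univ_eq_sum_range (fun i => f (i + k.val)) n]
    refine Finset.sum_congr rfl fun i _ => ?_
    simp only [Matrix.conjTranspose_apply, hH₀]
    by_cases h : i.val + k'.val + 1 ≤ n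
    · simp only [hfdef, if_pos h, if_pos (show i.val + k.val + 1 ≤ n by omega),
        if_pos (show i.val + k.val + d + 1 ≤ n by omega),
        show i.val + k.val + d + 1 = i.val + k'.val + 1 from by omega]
      rfl
    · simp only [hfdef, if_neg h, if_neg (show ¬(i.val + k.val + d + 1 ≤ n) by omega),
        mul_zero, Finset.sum_const_zero]
  have hsum2 : ((Smat p m n B)ᴴ * Smat p m n B) (k, b) (k', c)
      = ∑ j ∈ Finset.range k.val, f j := by
    rw [Matrix.mul_apply, Fintype.sum_prod_type]
    have hstep : ∀ s : Fin n, (∑ a : Fin p,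
        ((Smat p m n B)ᴴ) (k, b) (s, a) * Smat p m n B (s, a) (k', c))
        = if s.val + 1 ≤ k.val then f (k.val - 1 - s.val) else 0 := by
      intro s
      simp only [Matrix.conjTranspose_apply, Smat]
      by_cases hs : s.val + 1 ≤ k.val
      · simp only [hfdef, if_pos hs, if_pos (show s.val + 1 ≤ k'.val by omega),
          if_pos (show k.val - 1 - s.val + d + 1 ≤ n by omega),
          show k.val - 1 - s.val + 1 = k.val - s.val from by omega,
          show k.val - 1 - s.val + d + 1 = k'.val - s.val from by omega]
        rfl
      · simp only [hfdef, if_neg hs, star_zero, zero_mul, Finset.sum_const_zero]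
    rw [Finset.sum_congr rfl fun s _ => hstep s,
      Fin.sum_univ_eq_sum_range (fun s => if s + 1 ≤ k.val then f (k.val - 1 - s) else 0) n,
      ← Finset.sum_subset (Finset.range_subset_range.mpr k.isLt.le)
        (fun x _ hx => if_neg (fun hc => hx (Finset.mem_range.mpr (by omega))))]
    rw [Finset.sum_congr rfl (fun x hx => if_pos (by
      have := Finset.mem_range.mp hx; omega))]
    exact Finset.sum_range_reflect f k.val
  rw [Matrix.add_apply, hsum1, hsum2]
  have hshift : ∑ i ∈ Finset.range n, f (i + k.val) = ∑ j ∈ Finset.Ico k.val n, f j := by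
    rw [Finset.sum_Ico_eq_sum_range,
      ← Finset.sum_subset (Finset.range_subset_range.mpr (show n - k.val ≤ n by omega))
        (fun x _ hx => by
          have hxn : n - k.val ≤ x := by
            by_contra hcon
            exact hx (Finset.mem_range.mpr (by omega))
          rw [hfdef]
          exact if_neg (by omega))]
    exact Finset.sum_congr rfl fun x _ => by rw [Nat.add_comm]
  rw [hshift, add_comm, Finset.range_eq_Ico,
    Finset.sum_Ico_consecutive f (Nat.zero_le k.val) k.isLt.le,
    ← Finset.range_eq_Ico, hrel']
  simp only [Matrix.one_apply]
  by_cases hd0 : d = 0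
  · have hkeq : k = k' := Fin.ext (by omega)
    subst hkeq
    simp [hd0, Prod.ext_iff]
  · have hne : ¬((k, b) = (k', c)) := by
      simp only [Prod.mk.injEq, not_and]
      intro hkc
      exact absurd (congrArg Fin.val hkc) (by omega)
    rw [if_neg hd0, if_neg hne]

/-- If `F₀(z) = ∑_{j=1}^n z^{-j} B_j` is isometric on the unit circle,
then `I - H₀ᴴ H₀` is positive semidefinite, bounded above by `I` in the Loewner
order, and its entries vanish on the first `m` rows and first `m` columns
(i.e. it has the form `diag(0_{m×m}, Δ)` with `0 ≤ Δ ≤ I`). -/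
theorem fir_isometry_hankel_structure
    (p m n : ℕ) (B : ℕ → Matrix (Fin p) (Fin m) ℂ)
    (H₀ : Matrix (Fin n × Fin p) (Fin n × Fin m) ℂ)
    (hH₀ : ∀ (i j : Fin n) (a : Fin p) (b : Fin m),
      H₀ (i, a) (j, b) = if i.val + j.val + 1 ≤ n then B (i.val + j.val + 1) a b else 0)
    (hiso : ∀ z : ℂ, ‖z‖ = 1 →
      (∑ j ∈ Finset.range n, z ^ (-(j + 1 : ℤ)) • B (j + 1))ᴴ *
        (∑ j ∈ Finset.range n, z ^ (-(j + 1 : ℤ)) • B (j + 1)) = 1) :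
    (1 - H₀ᴴ * H₀).PosSemidef ∧
    (1 - (1 - H₀ᴴ * H₀)).PosSemidef ∧
    (∀ (j k : Fin n) (b c : Fin m), (j.val = 0 ∨ k.val = 0) →
      ((1 - H₀ᴴ * H₀ : Matrix (Fin n × Fin m) (Fin n × Fin m) ℂ) (j, b)) (k, c) = 0) := by

  rcases Nat.eq_zero_or_pos n with hn | hn
  · subst hn
    have hzero : ∀ A : Matrix (Fin 0 × Fin m) (Fin 0 × Fin m) ℂ, A = 0 := by
      intro A; ext ⟨i, _⟩; exact i.elim0
    refine ⟨?_, ?_, ?_⟩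
    · rw [hzero (1 - H₀ᴴ * H₀)]; exact Matrix.PosSemidef.zero
    · rw [hzero (1 - (1 - H₀ᴴ * H₀))]; exact Matrix.PosSemidef.zero
    · intro j k b c _; exact j.elim0
  · set S := Smat p m n B with hS
    have hmain : H₀ᴴ * H₀ + Sᴴ * S = 1 := by
      have hherm : (H₀ᴴ * H₀ + Sᴴ * S)ᴴ = H₀ᴴ * H₀ + Sᴴ * S := by
        simp [Matrix.conjTranspose_add, Matrix.conjTranspose_mul]
      ext ⟨k, b⟩ ⟨k', c⟩
      rcases le_total k.val k'.val with h | h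
      · exact entry_eq p m n B hn hiso H₀ hH₀ k k' b c h
      · have h1 := congrFun (congrFun hherm (k, b)) (k', c)
        rw [Matrix.conjTranspose_apply] at h1
        rw [← h1, entry_eq p m n B hn hiso H₀ hH₀ k' k c b h]
        simp [Matrix.one_apply, Prod.ext_iff, eq_comm, and_comm]
    have h1 : 1 - H₀ᴴ * H₀ = Sᴴ * S := by rw [← hmain, add_sub_cancel_left]
    refine ⟨?_, ?_, ?_⟩
    · rw [h1]; exact Matrix.posSemidef_conjTranspose_mul_self S
    · rw [sub_sub_cancel]; exact Matrix.posSemidef_conjTranspose_mul_self H₀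
    · intro j k b c h
      rw [h1, Matrix.mul_apply]
      refine Finset.sum_eq_zero fun x _ => ?_
      rcases h with h | h
      · rw [Matrix.conjTranspose_apply,
          show S x (j, b) = 0 from if_neg (show ¬(x.1.val + 1 ≤ j.val) by omega), star_zero, zero_mul]
      · rw [show S x (k, c) = 0 from if_neg (show ¬(x.1.val + 1 ≤ k.val) by omega), mul_zero]
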